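/- Let K be a number field of degree n and let τ(𝔞) denote the number of integral ideal divisors of the ideal 𝔞. Then for every integer m > 0 and every integral ideal 𝔞, there exists an ideal 𝔟 | 𝔞 with N(𝔟) ≤ N(𝔞)^{1/m} and τ(𝔞) ≤ 2^{m−1} τ(𝔟)^{2m−1}. -/

import Mathlib

open UniqueFactorizationMonoid

section Aux

variable {A : Type*} [CommRing A] [IsDomain A] [IsDedekindDomain A]

private lemma dvd_ne_zero' {x y : Ideal A} (h : x ∣ y) (hy : y ≠ 0) : x ≠ 0 := by
  rintro rfl
  exact hy (zero_dvd_iff.mp h)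

private lemma setfinite_div {a : Ideal A} (ha : a ≠ 0) : {c : Ideal A | c ∣ a}.Finite := by
  haveI : Fintype (Ideal A)ˣ := Fintype.ofSubsingleton 1
  have F : Fintype {x : Ideal A // x ∣ a} := UniqueFactorizationMonoid.fintypeSubtypeDvd a ha
  have : Finite {x : Ideal A // x ∣ a} := Finite.of_fintype _
  exact Set.finite_coe_iff.mp this

private lemma tau_mul_le {a b : Ideal A} (ha : a ≠ 0) (hb : b ≠ 0) :
    Nat.card {c : Ideal A | c ∣ a * b} ≤
      Nat.card {c : Ideal A | c ∣ a} * Nat.card {c : Ideal A | c ∣ b} := by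
  haveI : Finite {c : Ideal A | c ∣ a} := (setfinite_div ha).to_subtype
  haveI : Finite {c : Ideal A | c ∣ b} := (setfinite_div hb).to_subtype
  rw [← Nat.card_prod]
  apply Nat.card_le_card_of_surjective
    (f := fun p : {c : Ideal A | c ∣ a} × {c : Ideal A | c ∣ b} =>
      (⟨p.1.1 * p.2.1, mul_dvd_mul p.1.2 p.2.2⟩ : {c : Ideal A | c ∣ a * b}))
  rintro ⟨d, hd⟩
  obtain ⟨d₁, d₂, h₁, h₂, rfl⟩ := exists_dvd_and_dvd_of_dvd_mul hd
  exact ⟨(⟨d₁, h₁⟩, ⟨d₂, h₂⟩), rfl⟩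

private lemma tau_le_two_pow {c : Ideal A} (hc : c ≠ 0) :
    Nat.card {d : Ideal A | d ∣ c} ≤ 2 ^ Multiset.card (normalizedFactors c) := by
  classical
  haveI : Finite {d : Ideal A | d ∣ c} := (setfinite_div hc).to_subtype
  have key : ∀ d : {d : Ideal A | d ∣ c},
      normalizedFactors d.1 ∈ (normalizedFactors c).powerset.toFinset := by
    intro d
    rw [Multiset.mem_toFinset, Multiset.mem_powerset]
    exact (dvd_iff_normalizedFactors_le_normalizedFactors (dvd_ne_zero' d.2 hc) hc).mp d.2
  have hinj : Function.Injective (fun d : {d : Ideal A | d ∣ c} =>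
      (⟨normalizedFactors d.1, key d⟩ :
        {s // s ∈ (normalizedFactors c).powerset.toFinset})) := by
    intro d₁ d₂ h
    have h' : normalizedFactors d₁.1 = normalizedFactors d₂.1 := congrArg Subtype.val h
    apply Subtype.ext
    rw [← associated_iff_eq]
    exact (associated_iff_normalizedFactors_eq_normalizedFactors
      (dvd_ne_zero' d₁.2 hc) (dvd_ne_zero' d₂.2 hc)).mpr h'
  calc Nat.card {d : Ideal A | d ∣ c}
      ≤ Nat.card {s // s ∈ (normalizedFactors c).powerset.toFinset} :=
        Nat.card_le_card_of_injective _ hinj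
    _ = (normalizedFactors c).powerset.toFinset.card := by
        rw [Nat.card_eq_fintype_card, Fintype.card_coe]
    _ ≤ Multiset.card (normalizedFactors c).powerset := Multiset.toFinset_card_le _
    _ = 2 ^ Multiset.card (normalizedFactors c) := Multiset.card_powerset _

private lemma pow_card_lt_prod (X : ℝ) (hX : 0 ≤ X) (s : Multiset ℝ) :
    s ≠ 0 → (∀ x ∈ s, X < x) → X ^ Multiset.card s < s.prod := by
  induction s using Multiset.induction_on with
  | empty => intro h; exact absurd rfl h
  | cons a s ih =>
    intro _ h
    rcases eq_or_ne s 0 with rfl | hs0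
    · simpa using h a (Multiset.mem_cons_self a 0)
    · have ha := h a (Multiset.mem_cons_self a s)
      have ihs := ih hs0 (fun x hx => h x (Multiset.mem_cons_of_mem hx))
      rw [Multiset.prod_cons, Multiset.card_cons, pow_succ, mul_comm (X ^ Multiset.card s) X]
      exact mul_lt_mul'' ha ihs hX (pow_nonneg hX _)

end Aux

set_option maxHeartbeats 1000000 in
/-- **Divisor-switching trick in number fields.**  Let `K` be a number field and `τ(𝔞)` the
number of integral ideal divisors of a nonzero integral ideal `𝔞`.  Then for every `m > 0`
there exists `𝔟 ∣ 𝔞` with `N(𝔟) ≤ N(𝔞)^{1/m}` and `τ(𝔞) ≤ 2^{m-1} τ(𝔟)^{2m-1}`. -/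
theorem stmt_8 (K : Type*) [Field K] [NumberField K]
    (m : ℕ) (hm : 0 < m)
    (𝔞 : Ideal (NumberField.RingOfIntegers K)) (h𝔞 : 𝔞 ≠ ⊥) :
    ∃ 𝔟 : Ideal (NumberField.RingOfIntegers K), 𝔟 ∣ 𝔞 ∧
      (Ideal.absNorm 𝔟 : ℝ) ≤ (Ideal.absNorm 𝔞 : ℝ) ^ ((1 : ℝ) / m) ∧
      (Nat.card {𝔠 : Ideal (NumberField.RingOfIntegers K) | 𝔠 ∣ 𝔞} : ℝ)
        ≤ 2 ^ (m - 1) *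
          (Nat.card {𝔠 : Ideal (NumberField.RingOfIntegers K) | 𝔠 ∣ 𝔟} : ℝ) ^ (2 * m - 1) := by
  classical
  have h0 : 𝔞 ≠ 0 := by simpa [Submodule.zero_eq_bot] using h𝔞
  have hN0 : 0 < Ideal.absNorm 𝔞 :=
    Nat.pos_of_ne_zero fun h => h𝔞 (Ideal.absNorm_eq_zero_iff.mp h)
  by_cases hN1 : Ideal.absNorm 𝔞 = 1
  · -- trivial case 𝔞 = ⊤
    have htop : 𝔞 = ⊤ := Ideal.absNorm_eq_one_iff.mp hN1
    refine ⟨𝔞, dvd_rfl, ?_, ?_⟩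
    · rw [hN1]; push_cast; rw [Real.one_rpow]
    · have hset : {𝔠 : Ideal (NumberField.RingOfIntegers K) | 𝔠 ∣ 𝔞} = {⊤} := by
        ext c
        simp only [Set.mem_setOf_eq, Set.mem_singleton_iff, htop]
        constructor
        · intro h
          have : IsUnit c := isUnit_of_dvd_one (by simpa [Ideal.one_eq_top] using h)
          exact Ideal.isUnit_iff.mp this
        · rintro rfl; exact dvd_rfl
      rw [hset]
      simp only [Nat.card_unique, Nat.cast_one, one_pow, mul_one]
      have : (1:ℝ) ≤ 2 ^ (m-1) := by
        calc (1:ℝ) = 1 ^ (m-1) := (one_pow _).symm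
        _ ≤ 2 ^ (m-1) := pow_le_pow_left₀ (by norm_num) (by norm_num) _
      simpa using this
  · -- main case
    have hN2 : 2 ≤ Ideal.absNorm 𝔞 := by omega
    set X : ℝ := (Ideal.absNorm 𝔞 : ℝ) ^ ((1 : ℝ) / m) with hXdef
    have hmR : (0:ℝ) < 1 / m := by positivity
    have hX1 : 1 < X := by
      rw [hXdef]
      refine (Real.one_lt_rpow_iff_of_pos (by exact_mod_cast hN0)).mpr (Or.inl ⟨?_, hmR⟩)
      exact_mod_cast hN2
    have hX0 : (0:ℝ) < X := lt_trans one_pos hX1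
    have hXm : X ^ m = (Ideal.absNorm 𝔞 : ℝ) := by
      rw [hXdef, ← Real.rpow_natCast ((Ideal.absNorm 𝔞 : ℝ) ^ ((1:ℝ)/m)) m,
        ← Real.rpow_mul (by positivity), one_div_mul_cancel
          (by exact_mod_cast hm.ne' : (m:ℝ) ≠ 0), Real.rpow_one]
    -- the set of small divisors and the maximizer 𝔟
    set S : Set (Ideal (NumberField.RingOfIntegers K)) :=
      {d | d ∣ 𝔞 ∧ (Ideal.absNorm d : ℝ) ≤ X} with hSdef
    have hSfin : S.Finite := (setfinite_div h0).subset fun d hd => hd.1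
    have hSne : S.Nonempty := ⟨1, one_dvd _, by rw [map_one]; exact_mod_cast hX1.le⟩
    obtain ⟨𝔟, h𝔟S, h𝔟max⟩ := Set.exists_max_image S
      (fun d => Nat.card {c : Ideal (NumberField.RingOfIntegers K) | c ∣ d}) hSfin hSne
    set T : ℕ := Nat.card {c : Ideal (NumberField.RingOfIntegers K) | c ∣ 𝔟} with hTdef
    have tau_le_T : ∀ d, d ∣ 𝔞 → (Ideal.absNorm d : ℝ) ≤ X →
        Nat.card {c : Ideal (NumberField.RingOfIntegers K) | c ∣ d} ≤ T :=
      fun d h1 h2 => h𝔟max d ⟨h1, h2⟩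
    have h𝔟0 : 𝔟 ≠ 0 := dvd_ne_zero' h𝔟S.1 h0
    have hT1 : 1 ≤ T := by
      haveI : Finite {c : Ideal (NumberField.RingOfIntegers K) | c ∣ 𝔟} :=
        (setfinite_div h𝔟0).to_subtype
      haveI : Nonempty {c : Ideal (NumberField.RingOfIntegers K) | c ∣ 𝔟} :=
        ⟨⟨1, one_dvd _⟩⟩
      exact Nat.card_pos
    have hT1R : (1:ℝ) ≤ (T:ℝ) := by exact_mod_cast hT1
    -- main induction
    have claim : ∀ k : ℕ, ∀ 𝔠 : Ideal (NumberField.RingOfIntegers K), 𝔠 ∣ 𝔞 →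
        (Ideal.absNorm 𝔠 : ℝ) ≤ X ^ (k + 1) →
        (Nat.card {c : Ideal (NumberField.RingOfIntegers K) | c ∣ 𝔠} : ℝ)
          ≤ 2 ^ k * (T:ℝ) ^ (2 * k + 1) := by
      intro k
      induction k with
      | zero =>
        intro 𝔠 h1 h2
        rw [zero_add, pow_one] at h2
        have h3 : ((Nat.card {c : Ideal (NumberField.RingOfIntegers K) | c ∣ 𝔠} : ℕ) : ℝ)
            ≤ (T : ℝ) := Nat.cast_le.mpr (tau_le_T 𝔠 h1 h2)
        simpa using h3
      | succ k ih =>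
        intro 𝔠 hc𝔞 hcN
        have hc0 : 𝔠 ≠ 0 := dvd_ne_zero' hc𝔞 h0
        set S₁ : Set (Ideal (NumberField.RingOfIntegers K)) :=
          {d | d ∣ 𝔠 ∧ (Ideal.absNorm d : ℝ) ≤ X} with hS₁def
        have hS₁fin : S₁.Finite := (setfinite_div hc0).subset fun d hd => hd.1
        have hS₁ne : S₁.Nonempty := ⟨1, one_dvd _, by rw [map_one]; exact_mod_cast hX1.le⟩
        obtain ⟨B₁, hB₁S, hB₁max⟩ := Set.exists_max_image S₁
          (fun d => Ideal.absNorm d) hS₁fin hS₁ne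
        obtain ⟨c', hc'eq⟩ := hB₁S.1
        have hB₁0 : B₁ ≠ 0 := fun h => hc0 (by rw [hc'eq, h, zero_mul])
        have hc'0 : c' ≠ 0 := fun h => hc0 (by rw [hc'eq, h, mul_zero])
        have hB₁𝔞 : B₁ ∣ 𝔞 := dvd_trans hB₁S.1 hc𝔞
        have hc'𝔠 : c' ∣ 𝔠 := ⟨B₁, by rw [hc'eq]; ring⟩
        have htauB₁ : Nat.card {c : Ideal (NumberField.RingOfIntegers K) | c ∣ B₁} ≤ T :=
          tau_le_T B₁ hB₁𝔞 hB₁S.2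
        have hsplit : Nat.card {c : Ideal (NumberField.RingOfIntegers K) | c ∣ 𝔠} ≤
            Nat.card {c : Ideal (NumberField.RingOfIntegers K) | c ∣ B₁} *
            Nat.card {c : Ideal (NumberField.RingOfIntegers K) | c ∣ c'} := by
          rw [hc'eq]; exact tau_mul_le hB₁0 hc'0
        by_cases hc'1 : c' = 1
        · -- 𝔠 = B₁
          have h𝔠B : 𝔠 = B₁ := by rw [hc'eq, hc'1, mul_one]
          have : Nat.card {c : Ideal (NumberField.RingOfIntegers K) | c ∣ 𝔠} ≤ T :=
            tau_le_T 𝔠 hc𝔞 (by rw [h𝔠B]; exact hB₁S.2)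
          have h2p : (1:ℝ) ≤ 2 ^ (k+1) := by
            calc (1:ℝ) = 1 ^ (k+1) := (one_pow _).symm
            _ ≤ 2 ^ (k+1) := pow_le_pow_left₀ (by norm_num) (by norm_num) _
          calc (Nat.card {c : Ideal (NumberField.RingOfIntegers K) | c ∣ 𝔠} : ℝ)
              ≤ (T:ℝ) := by exact_mod_cast this
            _ ≤ (T:ℝ) ^ (2*(k+1)+1) := le_self_pow₀ hT1R (by omega)
            _ ≤ 2 ^ (k+1) * (T:ℝ) ^ (2*(k+1)+1) := by
                exact le_mul_of_one_le_left (by positivity) h2p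
        · by_cases hq : ∃ q : Ideal (NumberField.RingOfIntegers K),
              Prime q ∧ q ∣ c' ∧ (Ideal.absNorm q : ℝ) ≤ X
          · -- peel off B₁ and a small prime q
            obtain ⟨q, hqprime, hqc', hqX⟩ := hq
            have hq0 : q ≠ 0 := hqprime.ne_zero
            have hq2 : 2 ≤ Ideal.absNorm q := by
              have hz : Ideal.absNorm q ≠ 0 := by
                rw [Ne, Ideal.absNorm_eq_zero_iff, ← Submodule.zero_eq_bot]
                exact hq0
              have ho : Ideal.absNorm q ≠ 1 := by
                rw [Ne, Ideal.absNorm_eq_one_iff]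
                intro h
                exact hqprime.not_unit (by rw [h, ← Ideal.one_eq_top]; exact isUnit_one)
              omega
            have hBq : B₁ * q ∣ 𝔠 := by
              rw [hc'eq]; exact mul_dvd_mul_left B₁ hqc'
            have hB₁pos : 0 < Ideal.absNorm B₁ := Nat.pos_of_ne_zero (by
              rw [Ne, Ideal.absNorm_eq_zero_iff, ← Submodule.zero_eq_bot]; exact hB₁0)
            have hkey : X < (Ideal.absNorm B₁ : ℝ) * (Ideal.absNorm q : ℝ) := by
              by_contra hcon
              push_neg at hcon
              have hmem : B₁ * q ∈ S₁ := ⟨hBq, by rw [map_mul]; push_cast; exact hcon⟩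
              have := hB₁max _ hmem
              simp only [map_mul] at this
              have h2 : Ideal.absNorm B₁ * 2 ≤ Ideal.absNorm B₁ * Ideal.absNorm q :=
                Nat.mul_le_mul_left _ hq2
              omega
            obtain ⟨c'', hc''eq⟩ := hqc'
            have hc''0 : c'' ≠ 0 := fun h => hc'0 (by rw [hc''eq, h, mul_zero])
            have hc''𝔞 : c'' ∣ 𝔞 :=
              dvd_trans (dvd_trans ⟨q, by rw [hc''eq]; ring⟩ hc'𝔠) hc𝔞
            have hNfact : (Ideal.absNorm 𝔠 : ℝ) =
                ((Ideal.absNorm B₁ : ℝ) * (Ideal.absNorm q : ℝ)) * (Ideal.absNorm c'' : ℝ) := by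
              rw [hc'eq, hc''eq, map_mul, map_mul]; push_cast; ring
            have hNc'' : (Ideal.absNorm c'' : ℝ) ≤ X ^ (k+1) := by
              have hstep : (Ideal.absNorm c'' : ℝ) * X ≤ X ^ (k+1) * X := by
                calc (Ideal.absNorm c'' : ℝ) * X
                    ≤ (Ideal.absNorm c'' : ℝ) *
                        ((Ideal.absNorm B₁ : ℝ) * (Ideal.absNorm q : ℝ)) :=
                      mul_le_mul_of_nonneg_left hkey.le (by positivity)
                  _ = (Ideal.absNorm 𝔠 : ℝ) := by rw [hNfact]; ring
                  _ ≤ X ^ (k+1+1) := hcN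
                  _ = X ^ (k+1) * X := pow_succ _ _
              exact le_of_mul_le_mul_right hstep hX0
            have ihc := ih c'' hc''𝔞 hNc''
            have htauq : Nat.card {c : Ideal (NumberField.RingOfIntegers K) | c ∣ q} ≤ T :=
              tau_le_T q (dvd_trans (dvd_trans (Dvd.intro c'' hc''eq.symm) hc'𝔠) hc𝔞) hqX
            have hsplit2 : Nat.card {c : Ideal (NumberField.RingOfIntegers K) | c ∣ c'} ≤
                Nat.card {c : Ideal (NumberField.RingOfIntegers K) | c ∣ q} *
                Nat.card {c : Ideal (NumberField.RingOfIntegers K) | c ∣ c''} := by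
              rw [hc''eq]; exact tau_mul_le hq0 hc''0
            have hchain : Nat.card {c : Ideal (NumberField.RingOfIntegers K) | c ∣ 𝔠} ≤
                T * (T * Nat.card {c : Ideal (NumberField.RingOfIntegers K) | c ∣ c''}) := by
              calc Nat.card {c : Ideal (NumberField.RingOfIntegers K) | c ∣ 𝔠}
                  ≤ Nat.card {c : Ideal (NumberField.RingOfIntegers K) | c ∣ B₁} *
                    Nat.card {c : Ideal (NumberField.RingOfIntegers K) | c ∣ c'} := hsplit
                _ ≤ T * (Nat.card {c : Ideal (NumberField.RingOfIntegers K) | c ∣ q} *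
                    Nat.card {c : Ideal (NumberField.RingOfIntegers K) | c ∣ c''}) :=
                    Nat.mul_le_mul htauB₁ hsplit2
                _ ≤ T * (T * Nat.card {c : Ideal (NumberField.RingOfIntegers K) | c ∣ c''}) :=
                    Nat.mul_le_mul_left T (Nat.mul_le_mul_right _ htauq)
            calc (Nat.card {c : Ideal (NumberField.RingOfIntegers K) | c ∣ 𝔠} : ℝ)
                ≤ ((T * (T * Nat.card {c : Ideal (NumberField.RingOfIntegers K) | c ∣ c''}) :
                    ℕ) : ℝ) := Nat.cast_le.mpr hchain
              _ = (T:ℝ) * ((T:ℝ) *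
                    (Nat.card {c : Ideal (NumberField.RingOfIntegers K) | c ∣ c''} : ℝ)) := by
                  push_cast; ring
              _ ≤ (T:ℝ) * ((T:ℝ) * (2 ^ k * (T:ℝ) ^ (2*k+1))) := by
                  refine mul_le_mul_of_nonneg_left ?_ (by positivity)
                  exact mul_le_mul_of_nonneg_left ihc (by positivity)
              _ = 2 ^ k * (T:ℝ) ^ (2*k+3) := by ring
              _ ≤ 2 ^ (k+1) * (T:ℝ) ^ (2*k+3) := by
                  refine mul_le_mul_of_nonneg_right ?_ (by positivity)
                  exact pow_le_pow_right₀ (by norm_num) (Nat.le_succ k)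
              _ = 2 ^ (k+1) * (T:ℝ) ^ (2*(k+1)+1) := by ring_nf
          · -- all primes of c' have norm > X
            push_neg at hq
            set s : Multiset (Ideal (NumberField.RingOfIntegers K)) :=
              normalizedFactors c' with hsdef
            have hsprod : s.prod = c' := by
              rw [hsdef]
              exact associated_iff_eq.mp (prod_normalizedFactors hc'0)
            have hs0 : s ≠ 0 := by
              intro h
              rw [h, Multiset.prod_zero] at hsprod
              exact hc'1 hsprod.symm
            set t : Multiset ℝ := s.map (fun p => (Ideal.absNorm p : ℝ)) with htdef
            have ht0 : t ≠ 0 := by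
              rw [htdef, Ne, Multiset.map_eq_zero]; exact hs0
            have htmem : ∀ x ∈ t, X < x := by
              intro x hx
              obtain ⟨p, hp, rfl⟩ := Multiset.mem_map.mp hx
              exact hq p (prime_of_normalized_factor p hp) (dvd_of_mem_normalizedFactors hp)
            have htprod : t.prod = (Ideal.absNorm c' : ℝ) := by
              calc t.prod
                  = ((s.map (fun p => Ideal.absNorm p)).map (fun n : ℕ => (n:ℝ))).prod := by
                    rw [htdef, Multiset.map_map]; rfl
                _ = (((s.map (fun p => Ideal.absNorm p)).prod : ℕ) : ℝ) :=
                    (Nat.cast_multiset_prod _).symm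
                _ = ((Ideal.absNorm s.prod : ℕ) : ℝ) := by rw [← map_multiset_prod]
                _ = (Ideal.absNorm c' : ℝ) := by rw [hsprod]
            have hΩlt : X ^ Multiset.card s < (Ideal.absNorm c' : ℝ) := by
              have := pow_card_lt_prod X hX0.le t ht0 htmem
              rwa [htprod, htdef, Multiset.card_map] at this
            have hc0pos : 0 < Ideal.absNorm 𝔠 := Nat.pos_of_ne_zero (by
              rw [Ne, Ideal.absNorm_eq_zero_iff, ← Submodule.zero_eq_bot]; exact hc0)
            have hNc'le : (Ideal.absNorm c' : ℝ) ≤ (Ideal.absNorm 𝔠 : ℝ) := by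
              have hdvd : Ideal.absNorm c' ∣ Ideal.absNorm 𝔠 :=
                Ideal.absNorm_dvd_absNorm_of_le (Ideal.le_of_dvd hc'𝔠)
              exact_mod_cast Nat.le_of_dvd hc0pos hdvd
            have hΩle : Multiset.card s ≤ k + 1 := by
              by_contra hcon
              push_neg at hcon
              have h1 : X ^ (k+1+1) ≤ X ^ Multiset.card s :=
                pow_le_pow_right₀ hX1.le hcon
              have := lt_of_le_of_lt h1 (lt_of_lt_of_le hΩlt (le_trans hNc'le hcN))
              exact lt_irrefl _ this
            have htauc' : Nat.card {c : Ideal (NumberField.RingOfIntegers K) | c ∣ c'} ≤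
                2 ^ Multiset.card s := tau_le_two_pow hc'0
            have hchain : Nat.card {c : Ideal (NumberField.RingOfIntegers K) | c ∣ 𝔠} ≤
                T * 2 ^ (k+1) := by
              calc Nat.card {c : Ideal (NumberField.RingOfIntegers K) | c ∣ 𝔠}
                  ≤ Nat.card {c : Ideal (NumberField.RingOfIntegers K) | c ∣ B₁} *
                    Nat.card {c : Ideal (NumberField.RingOfIntegers K) | c ∣ c'} := hsplit
                _ ≤ T * 2 ^ Multiset.card s := Nat.mul_le_mul htauB₁ htauc'
                _ ≤ T * 2 ^ (k+1) :=
                    Nat.mul_le_mul_left T (Nat.pow_le_pow_right (by norm_num) hΩle)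
            calc (Nat.card {c : Ideal (NumberField.RingOfIntegers K) | c ∣ 𝔠} : ℝ)
                ≤ ((T * 2 ^ (k+1) : ℕ) : ℝ) := Nat.cast_le.mpr hchain
              _ = (T:ℝ) * 2 ^ (k+1) := by push_cast; ring
              _ ≤ (T:ℝ) ^ (2*(k+1)+1) * 2 ^ (k+1) := by
                  refine mul_le_mul_of_nonneg_right ?_ (by positivity)
                  exact le_self_pow₀ hT1R (by omega)
              _ = 2 ^ (k+1) * (T:ℝ) ^ (2*(k+1)+1) := by ring
    refine ⟨𝔟, h𝔟S.1, h𝔟S.2, ?_⟩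
    have hm1 : m - 1 + 1 = m := by omega
    have hfin := claim (m-1) 𝔞 dvd_rfl (by rw [hm1, hXm])
    rwa [show 2*(m-1)+1 = 2*m-1 from by omega] at hfin
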